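/- In additive 3-out-of-3 secret sharing over Z_L where s₁, s₂ are uniform and independent and s₃ = x - s₁ - s₂, any two of the three shares are jointly uniformly distributed on Z_L × Z_L, independently of the secret x. -/

import Mathlib

lemma uniform_map_of_bijective {α : Type*} [Fintype α] [Nonempty α] [DecidableEq α]
    (f : α → α) (hf : Function.Bijective f) :
    (PMF.uniformOfFintype α).map f = PMF.uniformOfFintype α := by
  ext b
  rw [PMF.map_apply]
  obtain ⟨a, rfl⟩ := hf.surjective b
  rw [tsum_eq_single a]
  · simp
  · intro a' ha'
    simp only [ite_eq_right_iff]
    intro h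
    exact absurd (hf.injective h.symm) ha'

theorem two_shares_uniform (L : ℕ) [NeZero L] (x : ZMod L) :
    ((PMF.uniformOfFintype (ZMod L × ZMod L)).map
        (fun p => (p.1, p.2)) = PMF.uniformOfFintype (ZMod L × ZMod L)) ∧
    ((PMF.uniformOfFintype (ZMod L × ZMod L)).map
        (fun p => (p.1, x - p.1 - p.2)) = PMF.uniformOfFintype (ZMod L × ZMod L)) ∧
    ((PMF.uniformOfFintype (ZMod L × ZMod L)).map
        (fun p => (p.2, x - p.1 - p.2)) = PMF.uniformOfFintype (ZMod L × ZMod L)) := by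
  refine ⟨?_, ?_, ?_⟩ <;> apply uniform_map_of_bijective
  · exact Function.bijective_id
  · apply Function.bijective_iff_has_inverse.2
    exact ⟨fun q => (q.1, x - q.1 - q.2),
      fun p => by obtain ⟨a,b⟩ := p; simp only [Prod.mk.injEq]; exact ⟨trivial, by ring⟩,
      fun q => by obtain ⟨a,b⟩ := q; simp only [Prod.mk.injEq]; exact ⟨trivial, by ring⟩⟩
  · apply Function.bijective_iff_has_inverse.2
    exact ⟨fun q => (x - q.1 - q.2, q.1),
      fun p => by obtain ⟨a,b⟩ := p; simp only [Prod.mk.injEq]; exact ⟨by ring, trivial⟩,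
      fun q => by obtain ⟨a,b⟩ := q; simp only [Prod.mk.injEq]; exact ⟨trivial, by ring⟩⟩
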